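/- (Fischer-type decomposition for bidegree (2,2)) Let $0 \le \ell \le n$ with $n \ge 2$, and let $Q(z,\bar z)$ be any real-valued bihomogeneous polynomial of bidegree $(2,2)$ on $\mathbb{C}^n$. Then there exist unique real-valued bihomogeneous polynomials $h^{(2)}(z,\bar z)$ of bidegree $(1,1)$ and $h^{(4)}(z,\bar z)$ of bidegree $(2,2)$ with $\triangle_\ell h^{(4)} = 0$ such that $Q(z,\bar z) = h^{(2)}(z,\bar z)\,|z|_\ell^2 + h^{(4)}(z,\bar z)$. -/

import Mathlib

open scoped BigOperators ComplexConjugate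

noncomputable section

/-- The sign `ε_j`: `-1` for the first `ℓ` indices, `+1` afterwards. -/
def eps (n ℓ : ℕ) (j : Fin n) : ℂ := if (j : ℕ) < ℓ then -1 else 1

/-- The matrix `g_0^{β̄ α}`: diagonal with entries `-1` (first `ℓ`) and `+1`. -/
def g0 (n ℓ : ℕ) (β α : Fin n) : ℂ := if β = α then eps n ℓ β else 0

/-- The polarized bidegree (2,2) polynomial
`s(z,w) = ∑ s_{α β̄ γ δ̄} z_α w_β z_γ w_δ`, where `w` plays the role of `z̄`. -/
def quartic {n : ℕ} (s : Fin n → Fin n → Fin n → Fin n → ℂ) :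
    (Fin n → ℂ) → (Fin n → ℂ) → ℂ :=
  fun z w => ∑ α : Fin n, ∑ β : Fin n, ∑ γ : Fin n, ∑ δ : Fin n,
    s α β γ δ * z α * w β * z γ * w δ

/-- Holomorphic partial derivative `∂/∂z_j` of a polarized function `f(z,w)`. -/
def Dz {n : ℕ} (f : (Fin n → ℂ) → (Fin n → ℂ) → ℂ) (j : Fin n) :
    (Fin n → ℂ) → (Fin n → ℂ) → ℂ :=
  fun z w => fderiv ℂ (fun z' => f z' w) z (Pi.single j 1)

/-- Antiholomorphic partial derivative `∂/∂z̄_j`, acting on the second (polarized) slot. -/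
def Dw {n : ℕ} (f : (Fin n → ℂ) → (Fin n → ℂ) → ℂ) (j : Fin n) :
    (Fin n → ℂ) → (Fin n → ℂ) → ℂ :=
  fun z w => fderiv ℂ (fun w' => f z w') w (Pi.single j 1)

/-- The signed Laplacian `△_ℓ = -∑_{j≤ℓ} ∂²/∂z_j∂z̄_j + ∑_{j>ℓ} ∂²/∂z_j∂z̄_j`. -/
def lapL {n : ℕ} (ℓ : ℕ) (f : (Fin n → ℂ) → (Fin n → ℂ) → ℂ) :
    (Fin n → ℂ) → (Fin n → ℂ) → ℂ :=
  fun z w => ∑ j : Fin n, eps n ℓ j * Dw (Dz f j) j z w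

/-- The signed norm `|z|_ℓ² = -∑_{j≤ℓ}|z_j|² + ∑_{j>ℓ}|z_j|²` (as a complex number). -/
def nSq (n ℓ : ℕ) (z : Fin n → ℂ) : ℂ := ∑ j : Fin n, eps n ℓ j * z j * conj (z j)

/-- A bidegree (1,1) polynomial `∑_{α,β} a_{α β̄} z_α z̄_β`. -/
def herm {n : ℕ} (a : Fin n → Fin n → ℂ) (z : Fin n → ℂ) : ℂ :=
  ∑ α : Fin n, ∑ β : Fin n, a α β * z α * conj (z β)

open Finset in
lemma eps_conj {n ℓ : ℕ} (j : Fin n) : conj (eps n ℓ j) = eps n ℓ j := by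
  unfold eps; split <;> simp

lemma eps_mul_self {n ℓ : ℕ} (j : Fin n) : eps n ℓ j * eps n ℓ j = 1 := by
  unfold eps; split <;> ring

lemma g0_conj {n ℓ : ℕ} (a b : Fin n) : conj (g0 n ℓ a b) = g0 n ℓ a b := by
  unfold g0; split <;> simp [eps_conj]

lemma g0_symm {n ℓ : ℕ} (a b : Fin n) : g0 n ℓ a b = g0 n ℓ b a := by
  unfold g0
  by_cases h : a = b
  · subst h; simp
  · simp [h, Ne.symm h]

lemma s3_rot {n : ℕ} (F : Fin n → Fin n → Fin n → ℂ) :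
    (∑ a : Fin n, ∑ b : Fin n, ∑ c : Fin n, F a b c)
      = ∑ b : Fin n, ∑ c : Fin n, ∑ a : Fin n, F a b c := by
  rw [Finset.sum_comm]
  exact Finset.sum_congr rfl fun _ _ => Finset.sum_comm

lemma s3_swap13 {n : ℕ} (F : Fin n → Fin n → Fin n → ℂ) :
    (∑ a : Fin n, ∑ b : Fin n, ∑ c : Fin n, F a b c)
      = ∑ c : Fin n, ∑ b : Fin n, ∑ a : Fin n, F a b c := by
  rw [s3_rot, Finset.sum_comm]

lemma fderiv_quad {n : ℕ} (A : Fin n → Fin n → ℂ) (z : Fin n → ℂ) (j : Fin n) :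
    fderiv ℂ (fun z' : Fin n → ℂ => ∑ α : Fin n, ∑ γ : Fin n, A α γ * z' α * z' γ) z
        (Pi.single j 1)
      = (∑ γ : Fin n, A j γ * z γ) + (∑ α : Fin n, A α j * z α) := by
  have hproj : ∀ (α : Fin n), HasFDerivAt (fun z' : Fin n → ℂ => z' α)
      (ContinuousLinearMap.proj α : (Fin n → ℂ) →L[ℂ] ℂ) z :=
    fun α => by
      have := (ContinuousLinearMap.proj (R := ℂ) (φ := fun _ : Fin n => ℂ) α).hasFDerivAt (x := z)
      exact this
  have H : HasFDerivAt (fun z' : Fin n → ℂ => ∑ α : Fin n, ∑ γ : Fin n, A α γ * z' α * z' γ)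
      (∑ α : Fin n, ∑ γ : Fin n,
        ((A α γ * z α) • (ContinuousLinearMap.proj γ : (Fin n → ℂ) →L[ℂ] ℂ)
          + z γ • (A α γ • (ContinuousLinearMap.proj α : (Fin n → ℂ) →L[ℂ] ℂ)))) z := by
    refine HasFDerivAt.fun_sum fun α _ => HasFDerivAt.fun_sum fun γ _ => ?_
    exact ((hproj α).const_mul (A α γ)).mul (hproj γ)
  rw [H.fderiv]
  simp only [ContinuousLinearMap.sum_apply, ContinuousLinearMap.add_apply,
    ContinuousLinearMap.smul_apply, ContinuousLinearMap.proj_apply, smul_eq_mul,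
    Pi.single_apply, mul_ite, mul_one, mul_zero, Finset.sum_add_distrib]
  rw [add_comm]
  congr 1
  · simp [Finset.sum_ite_eq', mul_comm]
  · rw [Finset.sum_comm]
    simp [Finset.sum_ite_eq', mul_comm]
/-- signed trace contraction of a quartic coefficient tensor -/
def TrQ (n ℓ : ℕ) (s : Fin n → Fin n → Fin n → Fin n → ℂ) (α β : Fin n) : ℂ :=
  ∑ j : Fin n, eps n ℓ j * (s j j α β + s j β α j + s α j j β + s α β j j)

lemma Dz_quartic {n : ℕ} (s : Fin n → Fin n → Fin n → Fin n → ℂ) (j : Fin n)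
    (z w : Fin n → ℂ) :
    Dz (quartic s) j z w
      = ∑ β : Fin n, ∑ δ : Fin n,
          ((∑ γ : Fin n, s j β γ δ * z γ) + (∑ α : Fin n, s α β j δ * z α)) * w β * w δ := by
  have hfun : (fun z' => quartic s z' w)
      = fun z' : Fin n → ℂ => ∑ α : Fin n, ∑ γ : Fin n,
          (∑ β : Fin n, ∑ δ : Fin n, s α β γ δ * w β * w δ) * z' α * z' γ := by
    funext z'
    unfold quartic
    simp only [Finset.sum_mul]
    refine Finset.sum_congr rfl fun α _ => ?_
    rw [Finset.sum_comm]
    refine Finset.sum_congr rfl fun γ _ => Finset.sum_congr rfl fun β _ =>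
      Finset.sum_congr rfl fun δ _ => by ring
  show fderiv ℂ (fun z' => quartic s z' w) z (Pi.single j 1) = _
  rw [hfun, fderiv_quad]
  simp only [Finset.sum_mul, add_mul, Finset.sum_add_distrib]
  congr 1
  · rw [s3_rot (fun γ β δ => s j β γ δ * w β * w δ * z γ)]
    refine Finset.sum_congr rfl fun β _ => Finset.sum_congr rfl fun δ _ =>
      Finset.sum_congr rfl fun γ _ => by ring
  · rw [s3_rot (fun α β δ => s α β j δ * w β * w δ * z α)]
    refine Finset.sum_congr rfl fun β _ => Finset.sum_congr rfl fun δ _ =>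
      Finset.sum_congr rfl fun α _ => by ring

lemma DwDz_quartic {n : ℕ} (s : Fin n → Fin n → Fin n → Fin n → ℂ) (j : Fin n)
    (z w : Fin n → ℂ) :
    Dw (Dz (quartic s) j) j z w
      = (∑ δ : Fin n, ((∑ γ : Fin n, s j j γ δ * z γ) + (∑ α : Fin n, s α j j δ * z α)) * w δ)
        + ∑ β : Fin n, ((∑ γ : Fin n, s j β γ j * z γ) + (∑ α : Fin n, s α β j j * z α)) * w β := by
  have hfun : (fun w' => Dz (quartic s) j z w')
      = fun w' : Fin n → ℂ => ∑ β : Fin n, ∑ δ : Fin n,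
          ((∑ γ : Fin n, s j β γ δ * z γ) + (∑ α : Fin n, s α β j δ * z α)) * w' β * w' δ :=
    funext fun w' => Dz_quartic s j z w'
  show fderiv ℂ (fun w' => Dz (quartic s) j z w') w (Pi.single j 1) = _
  rw [hfun, fderiv_quad]

lemma lapL_quartic {n ℓ : ℕ} (s : Fin n → Fin n → Fin n → Fin n → ℂ) (z w : Fin n → ℂ) :
    lapL ℓ (quartic s) z w = ∑ α : Fin n, ∑ β : Fin n, TrQ n ℓ s α β * z α * w β := by
  unfold lapL
  have hL : ∀ j : Fin n, eps n ℓ j * Dw (Dz (quartic s) j) j z w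
      = (∑ δ : Fin n, ∑ γ : Fin n, eps n ℓ j * s j j γ δ * z γ * w δ)
        + (∑ δ : Fin n, ∑ α : Fin n, eps n ℓ j * s α j j δ * z α * w δ)
        + ((∑ β : Fin n, ∑ γ : Fin n, eps n ℓ j * s j β γ j * z γ * w β)
        + (∑ β : Fin n, ∑ α : Fin n, eps n ℓ j * s α β j j * z α * w β)) := by
    intro j
    rw [DwDz_quartic]
    simp only [Finset.mul_sum, add_mul, Finset.sum_mul, Finset.sum_add_distrib, mul_add]
    refine congrArg₂ (· + ·) (congrArg₂ (· + ·) ?_ ?_) (congrArg₂ (· + ·) ?_ ?_) <;>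
      refine Finset.sum_congr rfl fun x _ => Finset.sum_congr rfl fun y _ => by ring
  rw [Finset.sum_congr rfl fun j _ => hL j]
  simp only [Finset.sum_add_distrib]
  have E1 : (∑ j : Fin n, ∑ δ : Fin n, ∑ γ : Fin n, eps n ℓ j * s j j γ δ * z γ * w δ)
      = ∑ α : Fin n, ∑ β : Fin n, ∑ j : Fin n, eps n ℓ j * s j j α β * z α * w β := by
    rw [s3_swap13 (fun j δ γ => eps n ℓ j * s j j γ δ * z γ * w δ)]
  have E2 : (∑ j : Fin n, ∑ δ : Fin n, ∑ α : Fin n, eps n ℓ j * s α j j δ * z α * w δ)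
      = ∑ α : Fin n, ∑ β : Fin n, ∑ j : Fin n, eps n ℓ j * s α j j β * z α * w β := by
    rw [s3_rot (fun j δ α => eps n ℓ j * s α j j δ * z α * w δ)]
    rw [Finset.sum_comm]
  have E3 : (∑ j : Fin n, ∑ β : Fin n, ∑ γ : Fin n, eps n ℓ j * s j β γ j * z γ * w β)
      = ∑ α : Fin n, ∑ β : Fin n, ∑ j : Fin n, eps n ℓ j * s j β α j * z α * w β := by
    rw [s3_swap13 (fun j β γ => eps n ℓ j * s j β γ j * z γ * w β)]
  have E4 : (∑ j : Fin n, ∑ β : Fin n, ∑ α : Fin n, eps n ℓ j * s α β j j * z α * w β)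
      = ∑ α : Fin n, ∑ β : Fin n, ∑ j : Fin n, eps n ℓ j * s α β j j * z α * w β := by
    rw [s3_swap13 (fun j β α => eps n ℓ j * s α β j j * z α * w β)]
  rw [E1, E2, E3, E4]
  have hR : ∑ α : Fin n, ∑ β : Fin n, TrQ n ℓ s α β * z α * w β
      = (∑ α : Fin n, ∑ β : Fin n, ∑ j : Fin n, eps n ℓ j * s j j α β * z α * w β)
        + (∑ α : Fin n, ∑ β : Fin n, ∑ j : Fin n, eps n ℓ j * s j β α j * z α * w β)
        + ((∑ α : Fin n, ∑ β : Fin n, ∑ j : Fin n, eps n ℓ j * s α j j β * z α * w β)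
        + (∑ α : Fin n, ∑ β : Fin n, ∑ j : Fin n, eps n ℓ j * s α β j j * z α * w β)) := by
    unfold TrQ
    simp only [Finset.sum_mul, mul_add, add_mul, Finset.sum_add_distrib]
    ring
  rw [hR]
  ring
lemma quartic_add {n : ℕ} (s t : Fin n → Fin n → Fin n → Fin n → ℂ) (z w : Fin n → ℂ) :
    quartic (fun α β γ δ => s α β γ δ + t α β γ δ) z w = quartic s z w + quartic t z w := by
  unfold quartic
  simp only [add_mul, Finset.sum_add_distrib]

lemma quartic_sub {n : ℕ} (s t : Fin n → Fin n → Fin n → Fin n → ℂ) (z w : Fin n → ℂ) :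
    quartic (fun α β γ δ => s α β γ δ - t α β γ δ) z w = quartic s z w - quartic t z w := by
  unfold quartic
  simp only [sub_mul, Finset.sum_sub_distrib]

lemma quartic_ca {n ℓ : ℕ} (a : Fin n → Fin n → ℂ) (z w : Fin n → ℂ) :
    quartic (fun α β γ δ => a α β * g0 n ℓ γ δ) z w
      = (∑ α : Fin n, ∑ β : Fin n, a α β * z α * w β)
        * (∑ j : Fin n, eps n ℓ j * z j * w j) := by
  unfold quartic
  rw [Finset.sum_mul]
  refine Finset.sum_congr rfl fun α _ => ?_
  rw [Finset.sum_mul]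
  refine Finset.sum_congr rfl fun β _ => ?_
  rw [Finset.mul_sum]
  refine Finset.sum_congr rfl fun γ _ => ?_
  simp only [g0, mul_ite, ite_mul, zero_mul, mul_zero, Finset.sum_ite_eq, Finset.mem_univ,
    if_true]
  ring

lemma sum_eps_g0_diag {n : ℕ} (ℓ : ℕ) :
    (∑ j : Fin n, eps n ℓ j * g0 n ℓ j j) = (n : ℂ) := by
  have : ∀ j : Fin n, eps n ℓ j * g0 n ℓ j j = 1 := by
    intro j; simp [g0, eps_mul_self]
  rw [Finset.sum_congr rfl fun j _ => this j]
  simp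

lemma TrQ_ca {n ℓ : ℕ} (a : Fin n → Fin n → ℂ) (α β : Fin n) :
    TrQ n ℓ (fun α' β' γ' δ' => a α' β' * g0 n ℓ γ' δ') α β
      = (∑ j : Fin n, eps n ℓ j * a j j) * g0 n ℓ α β + ((n : ℂ) + 2) * a α β := by
  unfold TrQ
  simp only [mul_add, Finset.sum_add_distrib]
  have h1 : (∑ j : Fin n, eps n ℓ j * (a j j * g0 n ℓ α β))
      = (∑ j : Fin n, eps n ℓ j * a j j) * g0 n ℓ α β := by
    rw [Finset.sum_mul]; exact Finset.sum_congr rfl fun j _ => by ring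
  have h2 : (∑ j : Fin n, eps n ℓ j * (a j β * g0 n ℓ α j)) = a α β := by
    simp only [g0, mul_ite, ite_mul, zero_mul, mul_zero]
    rw [Finset.sum_ite_eq]
    simp [eps_mul_self]
    rw [mul_comm (a α β), ← mul_assoc, eps_mul_self, one_mul]
  have h3 : (∑ j : Fin n, eps n ℓ j * (a α j * g0 n ℓ j β)) = a α β := by
    simp only [g0, mul_ite, ite_mul, zero_mul, mul_zero]
    rw [Finset.sum_ite_eq']
    simp
    rw [show eps n ℓ β * (a α β * eps n ℓ β) = eps n ℓ β * eps n ℓ β * a α β from by ring,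
      eps_mul_self, one_mul]
  have h4 : (∑ j : Fin n, eps n ℓ j * (a α β * g0 n ℓ j j)) = (n : ℂ) * a α β := by
    have : ∀ j : Fin n, eps n ℓ j * (a α β * g0 n ℓ j j) = a α β := by
      intro j
      simp only [g0, if_true, ite_self, eq_self_iff_true, if_pos rfl]
      rw [mul_comm (a α β), ← mul_assoc, eps_mul_self, one_mul]
    rw [Finset.sum_congr rfl fun j _ => this j]
    simp [mul_comm]
  rw [h1, h2, h3, h4]
  ring

lemma TrQ_conj {n ℓ : ℕ} (q : Fin n → Fin n → Fin n → Fin n → ℂ)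
    (hq : ∀ α β γ δ, conj (q α β γ δ) = q β α δ γ) (α β : Fin n) :
    conj (TrQ n ℓ q α β) = TrQ n ℓ q β α := by
  unfold TrQ
  rw [map_sum]
  refine Finset.sum_congr rfl fun j _ => ?_
  rw [map_mul, eps_conj, map_add, map_add, map_add, hq, hq, hq, hq]
  ring

lemma TrQ_sub {n ℓ : ℕ} (s t : Fin n → Fin n → Fin n → Fin n → ℂ) (α β : Fin n) :
    TrQ n ℓ (fun α' β' γ' δ' => s α' β' γ' δ' - t α' β' γ' δ') α β
      = TrQ n ℓ s α β - TrQ n ℓ t α β := by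
  unfold TrQ
  rw [← Finset.sum_sub_distrib]
  exact Finset.sum_congr rfl fun j _ => by ring

lemma TrQ_add {n ℓ : ℕ} (s t : Fin n → Fin n → Fin n → Fin n → ℂ) (α β : Fin n) :
    TrQ n ℓ (fun α' β' γ' δ' => s α' β' γ' δ' + t α' β' γ' δ') α β
      = TrQ n ℓ s α β + TrQ n ℓ t α β := by
  unfold TrQ
  rw [← Finset.sum_add_distrib]
  exact Finset.sum_congr rfl fun j _ => by ring
lemma quadPol {n : ℕ} (M : Fin n → Fin n → ℂ)
    (h : ∀ y : Fin n → ℂ, ∑ β : Fin n, ∑ δ : Fin n, M β δ * y β * y δ = 0) :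
    ∀ b d, M b d + M d b = 0 := by
  intro b d
  have hbb := h (fun j => if j = b then (1:ℂ) else 0)
  have hdd := h (fun j => if j = d then (1:ℂ) else 0)
  have key := h (fun j => (if j = b then (1:ℂ) else 0) + (if j = d then 1 else 0))
  simp only [mul_add, add_mul, mul_ite, ite_mul, zero_mul, mul_zero, mul_one, one_mul,
    Finset.sum_add_distrib, Finset.sum_ite_eq', Finset.mem_univ, if_true] at hbb hdd key
  linear_combination key - hbb - hdd

lemma hermPol {n : ℕ} (T : Fin n → Fin n → ℂ)
    (h : ∀ z : Fin n → ℂ, ∑ α : Fin n, ∑ β : Fin n, T α β * z α * conj (z β) = 0) :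
    ∀ a b, T a b = 0 := by
  intro a b
  have key : ∀ s t : ℂ,
      T a a * (s * conj s) + T a b * (s * conj t) + T b a * (t * conj s)
        + T b b * (t * conj t) = 0 := by
    intro s t
    have h0 := h (fun j => (if j = a then s else 0) + (if j = b then t else 0))
    simp only [map_add, apply_ite (starRingEnd ℂ), map_zero, mul_add, add_mul, mul_ite,
      ite_mul, zero_mul, mul_zero, Finset.sum_add_distrib, Finset.sum_ite_eq',
      Finset.mem_univ, if_true] at h0
    linear_combination h0
  have e1 := key 1 0
  have e2 := key 0 1
  have e3 := key 1 1
  have e4 := key 1 Complex.I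
  simp only [map_one, map_zero, Complex.conj_I, mul_zero, zero_mul, mul_one, one_mul,
    add_zero, zero_add] at e1 e2 e3 e4
  linear_combination e3/2 + (Complex.I/2) * e4 + (-1/2 - Complex.I/2) * e1
    + (-1/2 + Complex.I^3/2) * e2 + ((T a b - T b a)/2) * Complex.I_sq
/-- fully polarized quartic form -/
def q4 {n : ℕ} (s : Fin n → Fin n → Fin n → Fin n → ℂ) (x y u v : Fin n → ℂ) : ℂ :=
  ∑ α : Fin n, ∑ β : Fin n, ∑ γ : Fin n, ∑ δ : Fin n,
    s α β γ δ * x α * y β * u γ * v δ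

lemma quartic_eq_q4 {n : ℕ} (s : Fin n → Fin n → Fin n → Fin n → ℂ) (z w : Fin n → ℂ) :
    quartic s z w = q4 s z w z w := rfl

lemma q4_smul1 {n : ℕ} (s : Fin n → Fin n → Fin n → Fin n → ℂ) (c : ℂ) (x y u v : Fin n → ℂ) :
    q4 s (fun i => c * x i) y u v = c * q4 s x y u v := by
  unfold q4
  simp only [Finset.mul_sum]
  refine Finset.sum_congr rfl fun α _ => Finset.sum_congr rfl fun β _ =>
    Finset.sum_congr rfl fun γ _ => Finset.sum_congr rfl fun δ _ => by ring

lemma q4_smul2 {n : ℕ} (s : Fin n → Fin n → Fin n → Fin n → ℂ) (c : ℂ) (x y u v : Fin n → ℂ) :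
    q4 s x (fun i => c * y i) u v = c * q4 s x y u v := by
  unfold q4
  simp only [Finset.mul_sum]
  refine Finset.sum_congr rfl fun α _ => Finset.sum_congr rfl fun β _ =>
    Finset.sum_congr rfl fun γ _ => Finset.sum_congr rfl fun δ _ => by ring

lemma q4_smul3 {n : ℕ} (s : Fin n → Fin n → Fin n → Fin n → ℂ) (c : ℂ) (x y u v : Fin n → ℂ) :
    q4 s x y (fun i => c * u i) v = c * q4 s x y u v := by
  unfold q4
  simp only [Finset.mul_sum]
  refine Finset.sum_congr rfl fun α _ => Finset.sum_congr rfl fun β _ =>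
    Finset.sum_congr rfl fun γ _ => Finset.sum_congr rfl fun δ _ => by ring

lemma q4_smul4 {n : ℕ} (s : Fin n → Fin n → Fin n → Fin n → ℂ) (c : ℂ) (x y u v : Fin n → ℂ) :
    q4 s x y u (fun i => c * v i) = c * q4 s x y u v := by
  unfold q4
  simp only [Finset.mul_sum]
  refine Finset.sum_congr rfl fun α _ => Finset.sum_congr rfl fun β _ =>
    Finset.sum_congr rfl fun γ _ => Finset.sum_congr rfl fun δ _ => by ring

lemma quartic_expand {n : ℕ} (s : Fin n → Fin n → Fin n → Fin n → ℂ)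
    (x y x' y' : Fin n → ℂ) (l m : ℂ) :
    quartic s (fun i => x i + l * x' i) (fun i => y i + m * y' i)
      = q4 s x y x y
        + l * (q4 s x' y x y + q4 s x y x' y)
        + m * (q4 s x y' x y + q4 s x y x y')
        + l * l * q4 s x' y x' y
        + m * m * q4 s x y' x y'
        + l * m * (q4 s x' y' x y + q4 s x' y x y' + q4 s x y' x' y + q4 s x y x' y')
        + l * l * m * (q4 s x' y' x' y + q4 s x' y x' y')
        + l * m * m * (q4 s x' y' x y' + q4 s x y' x' y')
        + l * l * m * m * q4 s x' y' x' y' := by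
  unfold quartic q4
  simp only [Finset.mul_sum, mul_add, ← Finset.sum_add_distrib]
  refine Finset.sum_congr rfl fun α _ => Finset.sum_congr rfl fun β _ =>
    Finset.sum_congr rfl fun γ _ => Finset.sum_congr rfl fun δ _ => by ring

lemma quarticPol {n : ℕ} (u : Fin n → Fin n → Fin n → Fin n → ℂ)
    (h : ∀ z : Fin n → ℂ, quartic u z (fun j => conj (z j)) = 0) :
    ∀ α β γ δ, u α β γ δ + u γ β α δ + u α δ γ β + u γ δ α β = 0 := by
  -- Step 1: real polarization gives the mixed (2,2) block
  have hS2 : ∀ z w : Fin n → ℂ,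
      q4 u w (fun j => conj (z j)) w (fun j => conj (z j))
        + (q4 u w (fun j => conj (w j)) z (fun j => conj (z j))
          + q4 u w (fun j => conj (z j)) z (fun j => conj (w j))
          + q4 u z (fun j => conj (w j)) w (fun j => conj (z j))
          + q4 u z (fun j => conj (z j)) w (fun j => conj (w j)))
        + q4 u z (fun j => conj (w j)) z (fun j => conj (w j)) = 0 := by
    intro z w
    have hE : ∀ l : ℂ, conj l = l →
        q4 u z (fun j => conj (z j)) z (fun j => conj (z j))
          + l * (q4 u w (fun j => conj (z j)) z (fun j => conj (z j))
              + q4 u z (fun j => conj (z j)) w (fun j => conj (z j)))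
          + l * (q4 u z (fun j => conj (w j)) z (fun j => conj (z j))
              + q4 u z (fun j => conj (z j)) z (fun j => conj (w j)))
          + l * l * q4 u w (fun j => conj (z j)) w (fun j => conj (z j))
          + l * l * q4 u z (fun j => conj (w j)) z (fun j => conj (w j))
          + l * l * (q4 u w (fun j => conj (w j)) z (fun j => conj (z j))
              + q4 u w (fun j => conj (z j)) z (fun j => conj (w j))
              + q4 u z (fun j => conj (w j)) w (fun j => conj (z j))
              + q4 u z (fun j => conj (z j)) w (fun j => conj (w j)))
          + l * l * l * (q4 u w (fun j => conj (w j)) w (fun j => conj (z j))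
              + q4 u w (fun j => conj (z j)) w (fun j => conj (w j)))
          + l * l * l * (q4 u w (fun j => conj (w j)) z (fun j => conj (w j))
              + q4 u z (fun j => conj (w j)) w (fun j => conj (w j)))
          + l * l * l * l * q4 u w (fun j => conj (w j)) w (fun j => conj (w j)) = 0 := by
      intro l hl
      have h0 := h (fun i => z i + l * w i)
      rw [show (fun j => conj ((fun i => z i + l * w i) j))
          = (fun j => conj (z j) + conj l * conj (w j)) from funext fun j => by
            simp [map_add, map_mul]] at h0
      rw [hl] at h0
      rw [quartic_expand] at h0
      linear_combination h0
    have e0 := h z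
    rw [quartic_eq_q4] at e0
    have e1 := hE 1 (by simp)
    have em1 := hE (-1) (by simp)
    have e2 := hE 2 (by simp [Complex.conj_ofNat])
    have em2 := hE (-2) (by simp [Complex.conj_ofNat])
    linear_combination (2/3 : ℂ) * e1 + (2/3 : ℂ) * em1 - (1/24 : ℂ) * e2
      - (1/24 : ℂ) * em2 - (5/4 : ℂ) * e0
  -- Step 2: complex rescalings isolate the (2,0)x(0,2) block
  have key : ∀ z w : Fin n → ℂ,
      q4 u w (fun j => conj (z j)) w (fun j => conj (z j)) = 0 := by
    intro z w
    have h1 := hS2 z w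
    have h2 := hS2 z (fun i => Complex.I * w i)
    have h3 := hS2 z (fun i => (1 + Complex.I) * w i)
    simp only [show ∀ x : ℂ, conj (Complex.I * x) = (-Complex.I) * conj x from fun x => by
        rw [map_mul, Complex.conj_I]] at h2
    simp only [show ∀ x : ℂ, conj ((1 + Complex.I) * x) = (1 + -Complex.I) * conj x
        from fun x => by rw [map_mul, map_add, map_one, Complex.conj_I]] at h3
    simp only [q4_smul1, q4_smul2, q4_smul3, q4_smul4] at h2 h3
    linear_combination h1/4 - h2/4 + (Complex.I/4) * h1 + (Complex.I/4) * h2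
      - (Complex.I/4) * h3
      + ((3/4 : ℂ) * q4 u w (fun j => conj (z j)) w (fun j => conj (z j))
        - (1/4 : ℂ) * (q4 u w (fun j => conj (w j)) z (fun j => conj (z j))
          + q4 u w (fun j => conj (z j)) z (fun j => conj (w j))
          + q4 u z (fun j => conj (w j)) w (fun j => conj (z j))
          + q4 u z (fun j => conj (z j)) w (fun j => conj (w j)))
        - (1/4 : ℂ) * q4 u z (fun j => conj (w j)) z (fun j => conj (w j)))
        * Complex.I_sq
  have key' : ∀ w y : Fin n → ℂ, q4 u w y w y = 0 := by
    intro w y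
    have hk := key (fun j => conj (y j)) w
    simpa using hk
  have hre : ∀ (wv y : Fin n → ℂ), q4 u wv y wv y
      = ∑ β : Fin n, ∑ δ : Fin n,
          (∑ α : Fin n, ∑ γ : Fin n, u α β γ δ * wv α * wv γ) * y β * y δ := by
    intro wv y
    unfold q4
    simp only [Finset.sum_mul]
    rw [Finset.sum_comm]
    refine Finset.sum_congr rfl fun β _ => ?_
    rw [s3_rot (fun α γ δ => u α β γ δ * wv α * y β * wv γ * y δ)]
    rw [s3_rot (fun γ δ α => u α β γ δ * wv α * y β * wv γ * y δ)]
    refine Finset.sum_congr rfl fun δ _ => Finset.sum_congr rfl fun a _ =>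
      Finset.sum_congr rfl fun c _ => by ring
  intro α β γ δ
  have step1 : ∀ (w : Fin n → ℂ) (b d : Fin n),
      (∑ a : Fin n, ∑ c : Fin n, u a b c d * w a * w c)
        + (∑ a : Fin n, ∑ c : Fin n, u a d c b * w a * w c) = 0 := by
    intro w b d
    exact quadPol (fun b' d' => ∑ a : Fin n, ∑ c : Fin n, u a b' c d' * w a * w c)
      (fun y => by rw [← hre w y]; exact key' w y) b d
  have step2 : ∀ w : Fin n → ℂ,
      ∑ a : Fin n, ∑ c : Fin n, (u a β c δ + u a δ c β) * w a * w c = 0 := by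
    intro w
    have h12 := step1 w β δ
    calc ∑ a : Fin n, ∑ c : Fin n, (u a β c δ + u a δ c β) * w a * w c
        = (∑ a : Fin n, ∑ c : Fin n, u a β c δ * w a * w c)
          + (∑ a : Fin n, ∑ c : Fin n, u a δ c β * w a * w c) := by
          simp only [add_mul, Finset.sum_add_distrib]
      _ = 0 := h12
  have hfin := quadPol (fun a c => u a β c δ + u a δ c β) step2 α γ
  linear_combination hfin

/-- Fischer-type decomposition for bidegree (2,2):
every real-valued bidegree (2,2) polynomial `Q` decomposes as
`Q = h⁽²⁾ |z|_ℓ² + h⁽⁴⁾` with `h⁽²⁾` real of bidegree (1,1), `h⁽⁴⁾` real of bidegree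
(2,2) and `△_ℓ h⁽⁴⁾ = 0`, uniquely at the level of polynomial functions. -/
theorem stmt3 {n ℓ : ℕ} (hn : 2 ≤ n) (hl : ℓ ≤ n)
    (q : Fin n → Fin n → Fin n → Fin n → ℂ)
    (hqreal : ∀ α β γ δ, conj (q α β γ δ) = q β α δ γ) :
    ∃ (a : Fin n → Fin n → ℂ) (b : Fin n → Fin n → Fin n → Fin n → ℂ),
      (∀ α β, conj (a α β) = a β α) ∧
      (∀ α β γ δ, conj (b α β γ δ) = b β α δ γ) ∧
      (∀ z : Fin n → ℂ, lapL ℓ (quartic b) z (fun j => conj (z j)) = 0) ∧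
      (∀ z : Fin n → ℂ,
        quartic q z (fun j => conj (z j))
          = herm a z * nSq n ℓ z + quartic b z (fun j => conj (z j))) ∧
      (∀ (a' : Fin n → Fin n → ℂ) (b' : Fin n → Fin n → Fin n → Fin n → ℂ),
        (∀ α β, conj (a' α β) = a' β α) →
        (∀ α β γ δ, conj (b' α β γ δ) = b' β α δ γ) →
        (∀ z : Fin n → ℂ, lapL ℓ (quartic b') z (fun j => conj (z j)) = 0) →
        (∀ z : Fin n → ℂ,
          quartic q z (fun j => conj (z j))
            = herm a' z * nSq n ℓ z + quartic b' z (fun j => conj (z j))) →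
        (∀ z : Fin n → ℂ, herm a z = herm a' z) ∧
        (∀ z : Fin n → ℂ,
          quartic b z (fun j => conj (z j)) = quartic b' z (fun j => conj (z j)))) := by
  have hn2 : ((n:ℂ) + 2) ≠ 0 := by
    have h : ((n:ℂ) + 2) = ((n + 2 : ℕ) : ℂ) := by push_cast; ring
    rw [h]
    exact Nat.cast_ne_zero.2 (by omega)
  have h2n2 : (2*(n:ℂ) + 2) ≠ 0 := by
    have h : (2*(n:ℂ) + 2) = ((2*n + 2 : ℕ) : ℂ) := by push_cast; ring
    rw [h]
    exact Nat.cast_ne_zero.2 (by omega)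
  set t : ℂ := ∑ j : Fin n, eps n ℓ j * TrQ n ℓ q j j with ht_def
  set a : Fin n → Fin n → ℂ :=
    fun α β => ((n:ℂ)+2)⁻¹ * (TrQ n ℓ q α β - (2*(n:ℂ)+2)⁻¹ * t * g0 n ℓ α β) with ha_def
  set b : Fin n → Fin n → Fin n → Fin n → ℂ :=
    fun α β γ δ => q α β γ δ - a α β * g0 n ℓ γ δ with hb_def
  have ht : conj t = t := by
    rw [ht_def, map_sum]
    exact Finset.sum_congr rfl fun j _ => by
      rw [map_mul, eps_conj, TrQ_conj q hqreal]
  have hcast : conj ((n:ℂ)) = (n:ℂ) := Complex.conj_natCast n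
  have ha : ∀ α β, conj (a α β) = a β α := by
    intro α β
    rw [ha_def]
    simp only [map_mul, map_sub, map_inv₀, map_add, map_ofNat, hcast, ht,
      TrQ_conj q hqreal, g0_conj]
    rw [g0_symm]
  have hb : ∀ α β γ δ, conj (b α β γ δ) = b β α δ γ := by
    intro α β γ δ
    rw [hb_def]
    simp only [map_sub, map_mul, hqreal, ha, g0_conj]
    rw [g0_symm]
  have htra : (∑ j : Fin n, eps n ℓ j * a j j) = (2*(n:ℂ)+2)⁻¹ * t := by
    calc ∑ j : Fin n, eps n ℓ j * a j j
        = ∑ j : Fin n, (((n:ℂ)+2)⁻¹ * (eps n ℓ j * TrQ n ℓ q j j)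
            - ((n:ℂ)+2)⁻¹ * ((2*(n:ℂ)+2)⁻¹ * t) * (eps n ℓ j * g0 n ℓ j j)) :=
          Finset.sum_congr rfl fun j _ => by simp only [ha_def]; ring
      _ = ((n:ℂ)+2)⁻¹ * (∑ j : Fin n, eps n ℓ j * TrQ n ℓ q j j)
            - ((n:ℂ)+2)⁻¹ * ((2*(n:ℂ)+2)⁻¹ * t)
              * (∑ j : Fin n, eps n ℓ j * g0 n ℓ j j) := by
          rw [Finset.sum_sub_distrib, ← Finset.mul_sum, ← Finset.mul_sum]
      _ = (2*(n:ℂ)+2)⁻¹ * t := by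
          rw [sum_eps_g0_diag, ← ht_def]
          field_simp
          ring
  have hTrb : ∀ α β, TrQ n ℓ b α β = 0 := by
    intro α β
    rw [hb_def]
    rw [TrQ_sub q (fun α' β' γ' δ' => a α' β' * g0 n ℓ γ' δ'), TrQ_ca, htra]
    simp only [ha_def]
    field_simp
    ring
  have hlap : ∀ z : Fin n → ℂ, lapL ℓ (quartic b) z (fun j => conj (z j)) = 0 := by
    intro z
    rw [lapL_quartic]
    exact Finset.sum_eq_zero fun α _ => Finset.sum_eq_zero fun β _ => by
      rw [hTrb]; ring
  have hdec : ∀ z : Fin n → ℂ,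
      quartic q z (fun j => conj (z j))
        = herm a z * nSq n ℓ z + quartic b z (fun j => conj (z j)) := by
    intro z
    have e1 := quartic_sub q (fun α' β' γ' δ' => a α' β' * g0 n ℓ γ' δ') z
      (fun j => conj (z j))
    have e2 := quartic_ca (ℓ := ℓ) a z (fun j => conj (z j))
    beta_reduce at e1 e2
    rw [hb_def]
    simp only [herm, nSq]
    linear_combination -e1 + e2
  refine ⟨a, b, ha, hb, hlap, hdec, ?_⟩
  intro a' b' ha' hb' hlap' hdec'
  set U : Fin n → Fin n → Fin n → Fin n → ℂ :=
    fun α β γ δ => (a α β - a' α β) * g0 n ℓ γ δ + (b α β γ δ - b' α β γ δ) with hU_def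
  have hTrb' : ∀ α β, TrQ n ℓ b' α β = 0 := by
    intro α β
    refine hermPol (TrQ n ℓ b') (fun z => ?_) α β
    have h0 := hlap' z
    rw [lapL_quartic] at h0
    exact h0
  have hUz : ∀ z : Fin n → ℂ, quartic U z (fun j => conj (z j)) = 0 := by
    intro z
    have e1 := quartic_add (fun α' β' γ' δ' => (a α' β' - a' α' β') * g0 n ℓ γ' δ')
      (fun α' β' γ' δ' => b α' β' γ' δ' - b' α' β' γ' δ') z (fun j => conj (z j))
    have e2 := quartic_sub b b' z (fun j => conj (z j))
    have e3 := quartic_ca (ℓ := ℓ) (fun α' β' => a α' β' - a' α' β') z (fun j => conj (z j))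
    have e6 := hdec z
    have e7 := hdec' z
    simp only [herm, nSq] at e6 e7
    beta_reduce at e1 e2 e3
    rw [hU_def]
    have e4 : (∑ α : Fin n, ∑ β : Fin n, (a α β - a' α β) * z α * conj (z β))
        = (∑ α : Fin n, ∑ β : Fin n, a α β * z α * conj (z β))
          - (∑ α : Fin n, ∑ β : Fin n, a' α β * z α * conj (z β)) := by
      simp only [sub_mul, Finset.sum_sub_distrib]
    linear_combination e1 + e2 + e3
      + (∑ j : Fin n, eps n ℓ j * z j * conj (z j)) * e4 - e6 + e7
  have hpol := quarticPol U hUz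
  have hTrU : ∀ α β, TrQ n ℓ U α β = 0 := by
    intro α β
    unfold TrQ
    exact Finset.sum_eq_zero fun j _ => by
      linear_combination eps n ℓ j * hpol j j α β
  have hTrcd : ∀ α β, ((∑ j : Fin n, eps n ℓ j * (a j j - a' j j)) * g0 n ℓ α β
      + ((n:ℂ)+2) * (a α β - a' α β)) = 0 := by
    intro α β
    have h1 := hTrU α β
    rw [hU_def] at h1
    rw [TrQ_add (fun α' β' γ' δ' => (a α' β' - a' α' β') * g0 n ℓ γ' δ')
      (fun α' β' γ' δ' => b α' β' γ' δ' - b' α' β' γ' δ'), TrQ_ca, TrQ_sub b b',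
      hTrb α β, hTrb' α β] at h1
    linear_combination h1
  have htrd : (∑ j : Fin n, eps n ℓ j * (a j j - a' j j)) = 0 := by
    have h2 : ∑ α : Fin n, eps n ℓ α
        * ((∑ j : Fin n, eps n ℓ j * (a j j - a' j j)) * g0 n ℓ α α
          + ((n:ℂ)+2) * (a α α - a' α α)) = 0 :=
      Finset.sum_eq_zero fun α _ => by rw [hTrcd α α, mul_zero]
    have h3 : ∑ α : Fin n, eps n ℓ α
        * ((∑ j : Fin n, eps n ℓ j * (a j j - a' j j)) * g0 n ℓ α α
          + ((n:ℂ)+2) * (a α α - a' α α))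
        = (∑ j : Fin n, eps n ℓ j * (a j j - a' j j))
            * (∑ α : Fin n, eps n ℓ α * g0 n ℓ α α)
          + ((n:ℂ)+2) * (∑ α : Fin n, eps n ℓ α * (a α α - a' α α)) := by
      rw [Finset.mul_sum, Finset.mul_sum, ← Finset.sum_add_distrib]
      exact Finset.sum_congr rfl fun α _ => by ring
    rw [h3, sum_eps_g0_diag] at h2
    have h4 : (2*(n:ℂ)+2) * (∑ j : Fin n, eps n ℓ j * (a j j - a' j j)) = 0 := by
      linear_combination h2
    exact (mul_eq_zero.1 h4).resolve_left h2n2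
  have hd : ∀ α β, a α β = a' α β := by
    intro α β
    have h1 := hTrcd α β
    rw [htrd, zero_mul, zero_add] at h1
    rcases mul_eq_zero.1 h1 with h | h
    · exact absurd h hn2
    · exact sub_eq_zero.1 h
  constructor
  · intro z
    unfold herm
    exact Finset.sum_congr rfl fun α _ => Finset.sum_congr rfl fun β _ => by rw [hd]
  · intro z
    have hz : herm a z = herm a' z := by
      unfold herm
      exact Finset.sum_congr rfl fun α _ => Finset.sum_congr rfl fun β _ => by rw [hd]
    linear_combination -hdec z + hdec' z - nSq n ℓ z * hz

end
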